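/- A semiregular topological space X is completely regular if and only if its topology is generated by a normal quasi-uniformity, i.e., if and only if there exists a quasi-uniformity 𝓤 on X which is normal and such that for every x ∈ X the sets B(x;U) = {y : (x,y) ∈ U}, U ∈ 𝓤, form a neighborhood base at x. -/

import Mathlib

open Topology

/-- `B(A;U)`, the `U`-neighborhood of a set `A`. -/
def setBall {X : Type*} (A : Set X) (U : Set (X × X)) : Set X :=
  {y : X | ∃ a ∈ A, (a, y) ∈ U}

/-- A quasi-uniformity on `X` is a filter on `X × X` all of whose members contain
the diagonal, such that every member `U` contains a composition `V ○ V ⊆ U` of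
some member `V` with itself. -/
def IsQuasiUniformity {X : Type*} (𝓤 : Filter (X × X)) : Prop :=
  (∀ U ∈ 𝓤, SetRel.id ⊆ U) ∧ (∀ U ∈ 𝓤, ∃ V ∈ 𝓤, SetRel.comp V V ⊆ U)

/-- A quasi-uniformity on a topological space is normal if
`closure A ⊆ interior (closure B(A;U))` for all `A` and all entourages `U`. -/
def IsNormalQuasiUniformity {X : Type*} [TopologicalSpace X]
    (𝓤 : Filter (X × X)) : Prop :=
  ∀ A : Set X, ∀ U ∈ 𝓤, closure A ⊆ interior (closure (setBall A U))

/-- A quasi-uniformity generates the topology of `X` if for every `x` the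
neighborhood filter of `x` is the filter generated by the balls
`B(x;U) = {y | (x,y) ∈ U}`, `U ∈ 𝓤`. -/
def GeneratesTopology {X : Type*} [TopologicalSpace X]
    (𝓤 : Filter (X × X)) : Prop :=
  ∀ x : X, 𝓝 x = 𝓤.lift' (fun U => {y : X | (x, y) ∈ U})

/-- A topological space is semiregular if every neighborhood `O` of a point `x`
contains `interior (closure U)` for some neighborhood `U` of `x`. -/
def Semiregular (X : Type*) [TopologicalSpace X] : Prop :=
  ∀ x : X, ∀ O ∈ 𝓝 x, ∃ U ∈ 𝓝 x, interior (closure U) ⊆ O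

namespace QUAux



variable {X : Type*}

lemma setBall_singleton (x : X) (U : Set (X × X)) :
    setBall {x} U = {y | (x, y) ∈ U} := by
  ext y; simp [setBall]

lemma setBall_mono {A B : Set X} {U V : Set (X × X)} (hAB : A ⊆ B) (hUV : U ⊆ V) :
    setBall A U ⊆ setBall B V := fun _ ⟨a, ha, hay⟩ => ⟨a, hAB ha, hUV hay⟩

lemma setBall_comp (A : Set X) (U V : Set (X × X)) :
    setBall (setBall A U) V = setBall A (SetRel.comp U V) := by
  ext y
  constructor
  · rintro ⟨b, ⟨a, ha, hab⟩, hby⟩; exact ⟨a, ha, b, hab, hby⟩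
  · rintro ⟨a, ha, b, hab, hby⟩; exact ⟨b, ⟨a, ha, hab⟩, hby⟩

lemma subset_setBall {A : Set X} {U : Set (X × X)} (hU : SetRel.id ⊆ U) : A ⊆ setBall A U :=
  fun a ha => ⟨a, ha, hU (SetRel.mem_id.mpr rfl)⟩

def chain (V : ℕ → Set (X × X)) (x : X) : ℕ → ℕ → Set X
  | 0, k => (fun S => setBall S (V 0))^[k] {x}
  | n + 1, k =>
    if k % 2 = 0 then chain V x n (k / 2) else setBall (chain V x n (k / 2)) (V (n + 1))

variable {V : ℕ → Set (X × X)} {x : X}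

lemma chain_even (n k : ℕ) : chain V x (n + 1) (2 * k) = chain V x n k := by
  simp [chain, Nat.mul_mod_right, Nat.mul_div_cancel_left _ (by norm_num : 0 < 2)]

lemma chain_odd (n k : ℕ) :
    chain V x (n + 1) (2 * k + 1) = setBall (chain V x n k) (V (n + 1)) := by
  have h1 : (2 * k + 1) % 2 = 1 := by omega
  have h2 : (2 * k + 1) / 2 = k := by omega
  simp [chain, h1, h2]

lemma chain_step (hc : ∀ n, SetRel.comp (V (n + 1)) (V (n + 1)) ⊆ V n) :
    ∀ n k, setBall (chain V x n k) (V n) ⊆ chain V x n (k + 1) := by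
  intro n
  induction n with
  | zero =>
    intro k
    have : chain V x 0 (k + 1) = setBall (chain V x 0 k) (V 0) :=
      Function.iterate_succ_apply' _ _ _
    rw [this]
  | succ n ih =>
    intro k
    rcases Nat.even_or_odd k with ⟨m, hm⟩ | ⟨m, hm⟩
    · have hk : k = 2 * m := by omega
      subst hk
      rw [chain_even, chain_odd]
    · subst hm
      rw [chain_odd, setBall_comp]
      have h1 : setBall (chain V x n m) (SetRel.comp (V (n + 1)) (V (n + 1)))
          ⊆ setBall (chain V x n m) (V n) := setBall_mono subset_rfl (hc n)
      have h2 : (2 * m + 1 + 1) = 2 * (m + 1) := by ring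
      rw [h2, chain_even]
      exact h1.trans (ih m)

lemma chain_mono_k (hV : ∀ n, SetRel.id ⊆ V n)
    (hc : ∀ n, SetRel.comp (V (n + 1)) (V (n + 1)) ⊆ V n) {n k j : ℕ} (h : k ≤ j) :
    chain V x n k ⊆ chain V x n j := by
  induction j with
  | zero => simp_all
  | succ j ih =>
    rcases Nat.lt_or_ge k (j + 1) with h' | h'
    · exact (ih (by omega)).trans ((subset_setBall (hV n)).trans (chain_step hc n j))
    · have : k = j + 1 := by omega
      subst this; rfl

lemma chain_lift (m : ℕ) : ∀ n k, chain V x n k = chain V x (n + m) (2 ^ m * k) := by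
  induction m with
  | zero => intro n k; simp
  | succ m ih =>
    intro n k
    have h : 2 ^ (m + 1) * k = 2 * (2 ^ m * k) := by ring
    have : n + (m + 1) = (n + m) + 1 := by omega
    rw [this, h, chain_even, ← ih]

lemma chain_zero (n : ℕ) : chain V x n 0 = {x} := by
  induction n with
  | zero => rfl
  | succ n ih => simpa [chain] using ih

lemma chain_top (n : ℕ) : chain V x n (2 ^ n) = setBall {x} (V 0) := by
  have h := chain_lift (V := V) (x := x) n 0 1
  rw [zero_add, mul_one] at h
  rw [← h]
  show (fun S => setBall S (V 0))^[1] {x} = _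
  simp


lemma dyadic_le {n m k j : ℕ} (h : (k : ℝ) / 2 ^ n ≤ (j : ℝ) / 2 ^ m) :
    2 ^ m * k ≤ 2 ^ n * j := by
  have h2 : (0:ℝ) < 2 ^ n := by positivity
  have h3 : (0:ℝ) < 2 ^ m := by positivity
  have h4 := (div_le_div_iff₀ h2 h3).mp h
  have h5 : ((2 ^ m * k : ℕ) : ℝ) ≤ ((2 ^ n * j : ℕ) : ℝ) := by push_cast; nlinarith
  exact_mod_cast h5

lemma dyadic_lt {n m k j : ℕ} (h : (k : ℝ) / 2 ^ n < (j : ℝ) / 2 ^ m) :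
    2 ^ m * k < 2 ^ n * j := by
  have h2 : (0:ℝ) < 2 ^ n := by positivity
  have h3 : (0:ℝ) < 2 ^ m := by positivity
  have h4 := (div_lt_div_iff₀ h2 h3).mp h
  have h5 : ((2 ^ m * k : ℕ) : ℝ) < ((2 ^ n * j : ℕ) : ℝ) := by push_cast; nlinarith
  exact_mod_cast h5

section Topo

variable [TopologicalSpace X] {𝓤 : Filter (X × X)}

lemma chain_closure_succ (hnorm : IsNormalQuasiUniformity 𝓤) (hVmem : ∀ n, V n ∈ 𝓤)
    (hc : ∀ n, SetRel.comp (V (n + 1)) (V (n + 1)) ⊆ V n) (n k : ℕ) :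
    closure (chain V x n k) ⊆ interior (closure (chain V x n (k + 1))) :=
  (hnorm (chain V x n k) (V n) (hVmem n)).trans
    (interior_mono (closure_mono (chain_step hc n k)))

lemma chain_closure_lt (hV : ∀ n, SetRel.id ⊆ V n) (hnorm : IsNormalQuasiUniformity 𝓤)
    (hVmem : ∀ n, V n ∈ 𝓤) (hc : ∀ n, SetRel.comp (V (n + 1)) (V (n + 1)) ⊆ V n)
    {n k j : ℕ} (h : k < j) :
    closure (chain V x n k) ⊆ interior (closure (chain V x n j)) :=
  (chain_closure_succ hnorm hVmem hc n k).trans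
    (interior_mono (closure_mono (chain_mono_k hV hc h)))

lemma closure_chain_mono (hV : ∀ n, SetRel.id ⊆ V n)
    (hc : ∀ n, SetRel.comp (V (n + 1)) (V (n + 1)) ⊆ V n)
    {n m k j : ℕ} (h : (k : ℝ) / 2 ^ n ≤ (j : ℝ) / 2 ^ m) :
    closure (chain V x n k) ⊆ closure (chain V x m j) := by
  have e1 : chain V x n k = chain V x (n + m) (2 ^ m * k) := chain_lift m n k
  have e2 : chain V x m j = chain V x (n + m) (2 ^ n * j) := by
    rw [chain_lift n m j, Nat.add_comm m n]
  rw [e1, e2]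
  exact closure_mono (chain_mono_k hV hc (dyadic_le h))

lemma closure_chain_lt (hV : ∀ n, SetRel.id ⊆ V n) (hnorm : IsNormalQuasiUniformity 𝓤)
    (hVmem : ∀ n, V n ∈ 𝓤) (hc : ∀ n, SetRel.comp (V (n + 1)) (V (n + 1)) ⊆ V n)
    {n m k j : ℕ} (h : (k : ℝ) / 2 ^ n < (j : ℝ) / 2 ^ m) :
    closure (chain V x n k) ⊆ interior (closure (chain V x m j)) := by
  have e1 : chain V x n k = chain V x (n + m) (2 ^ m * k) := chain_lift m n k
  have e2 : chain V x m j = chain V x (n + m) (2 ^ n * j) := by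
    rw [chain_lift n m j, Nat.add_comm m n]
  rw [e1, e2]
  exact chain_closure_lt hV hnorm hVmem hc (dyadic_lt h)

end Topo


lemma exists_separating [TopologicalSpace X] {𝓤 : Filter (X × X)}
    (hrefl : ∀ U ∈ 𝓤, SetRel.id ⊆ U) (hcomp : ∀ U ∈ 𝓤, ∃ V ∈ 𝓤, SetRel.comp V V ⊆ U)
    (hnorm : IsNormalQuasiUniformity 𝓤) (x : X) {V₀ : Set (X × X)} (hV₀ : V₀ ∈ 𝓤) :
    ∃ f : X → ℝ, Continuous f ∧ f x = 0 ∧ (∀ y, f y ∈ Set.Icc (0:ℝ) 1) ∧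
      ∀ y, y ∉ interior (closure (setBall {x} V₀)) → f y = 1 := by
  choose! W hWmem hWcomp using hcomp
  set V : ℕ → Set (X × X) := fun n => W^[n] V₀ with hVdef
  have hVsucc : ∀ n, V (n + 1) = W (V n) := fun n => Function.iterate_succ_apply' W n V₀
  have hVmem : ∀ n, V n ∈ 𝓤 := by
    intro n; induction n with
    | zero => exact hV₀
    | succ n ih => rw [hVsucc]; exact hWmem _ ih
  have hc : ∀ n, SetRel.comp (V (n + 1)) (V (n + 1)) ⊆ V n := by
    intro n; rw [hVsucc]; exact hWcomp _ (hVmem n)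
  have hV : ∀ n, SetRel.id ⊆ V n := fun n => hrefl _ (hVmem n)
  set T : X → Set ℝ := fun y =>
    insert (1 : ℝ) {r | ∃ n k : ℕ, r = (k : ℝ) / 2 ^ n ∧ y ∈ closure (chain V x n k)}
    with hTdef
  have hTne : ∀ y, (T y).Nonempty := fun y => ⟨1, Set.mem_insert _ _⟩
  have hT0 : ∀ y, ∀ r ∈ T y, (0:ℝ) ≤ r := by
    rintro y r (rfl | ⟨n, k, rfl, -⟩)
    · norm_num
    · positivity
  have hTbdd : ∀ y, BddBelow (T y) := fun y => ⟨0, fun r hr => hT0 y r hr⟩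
  set f : X → ℝ := fun y => sInf (T y) with hfdef
  have hfle : ∀ y r, r ∈ T y → f y ≤ r := fun y r hr => csInf_le (hTbdd y) hr
  have hf0 : ∀ y, 0 ≤ f y := fun y => le_csInf (hTne y) (hT0 y)
  have hf1 : ∀ y, f y ≤ 1 := fun y => hfle y 1 (Set.mem_insert _ _)
  have hmem : ∀ y n k, y ∈ closure (chain V x n k) → f y ≤ (k:ℝ)/2^n :=
    fun y n k hy => hfle y _ (Set.mem_insert_of_mem _ ⟨n, k, rfl, hy⟩)
  have hfx : f x = 0 := by
    refine le_antisymm ?_ (hf0 x)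
    have hx0 : x ∈ closure (chain V x 0 0) := subset_closure rfl
    simpa using hmem x 0 0 hx0
  have hfD : ∀ y, y ∉ interior (closure (setBall {x} V₀)) → f y = 1 := by
    intro y hy
    refine le_antisymm (hf1 y) (le_csInf (hTne y) ?_)
    rintro r (rfl | ⟨n, k, rfl, hyc⟩)
    · exact le_refl 1
    · rcases lt_or_ge ((k:ℝ)/2^n) 1 with h | h
      · exfalso
        have h1 : (k:ℝ)/2^n < ((2 ^ n : ℕ) : ℝ)/2^n := by
          have hp : (0:ℝ) < 2 ^ n := by positivity
          rw [div_lt_one hp] at h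
          rw [div_lt_div_iff_of_pos_right hp]
          push_cast
          linarith
        have hsub := closure_chain_lt (x := x) hV hnorm hVmem hc h1
        rw [chain_top] at hsub
        exact hy (hsub hyc)
      · exact h
  have hcont : Continuous f := by
    rw [continuous_iff_lower_upperSemicontinuous]
    constructor
    · rw [lowerSemicontinuous_iff_isOpen_preimage]
      intro t
      rw [isOpen_iff_forall_mem_open]
      intro y hy
      simp only [Set.mem_preimage, Set.mem_Ioi] at hy
      rcases lt_or_ge t 0 with ht | ht
      · exact ⟨Set.univ, fun z _ => lt_of_lt_of_le ht (hf0 z), isOpen_univ, trivial⟩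
      · obtain ⟨M, hM⟩ : ∃ M : ℕ, ((1:ℝ)/2) ^ M < f y - t :=
          exists_pow_lt_of_lt_one (by linarith) (by norm_num)
        have h2M : ((1:ℝ)/2) ^ M = 1 / 2 ^ M := by rw [div_pow]; norm_num
        set k'' : ℕ := ⌊t * 2 ^ M⌋₊ + 1 with hk''def
        have hk1 : t < (k'' : ℝ) / 2 ^ M := by
          rw [lt_div_iff₀ (by positivity)]
          push_cast [hk''def]
          exact Nat.lt_floor_add_one (t * 2 ^ M)
        have hk2 : (k'' : ℝ) / 2 ^ M < f y := by
          have hfl : (k'' : ℝ) ≤ t * 2 ^ M + 1 := by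
            push_cast [hk''def]
            have := Nat.floor_le (by positivity : (0:ℝ) ≤ t * 2 ^ M)
            linarith
          rw [div_lt_iff₀ (by positivity)]
          rw [h2M] at hM
          have hp : (0:ℝ) < 2 ^ M := by positivity
          have : t + 1 / 2 ^ M < f y := by linarith
          calc (k'' : ℝ) ≤ t * 2 ^ M + 1 := hfl
            _ = (t + 1 / 2 ^ M) * 2 ^ M := by field_simp
            _ < f y * 2 ^ M := by
                exact mul_lt_mul_of_pos_right this hp
        refine ⟨(closure (chain V x M k''))ᶜ, ?_, isOpen_compl_iff.mpr isClosed_closure, ?_⟩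
        · intro z hz
          simp only [Set.mem_preimage, Set.mem_Ioi]
          have hge : (k'':ℝ)/2^M ≤ f z := by
            refine le_csInf (hTne z) ?_
            rintro r (rfl | ⟨m, j, rfl, hzc⟩)
            · linarith [hf1 y]
            · by_contra hlt
              push_neg at hlt
              exact hz (closure_chain_mono (x := x) hV hc hlt.le hzc)
          linarith
        · exact fun hyc => absurd (hmem y M k'' hyc) (not_le.mpr hk2)
    · rw [upperSemicontinuous_iff_isOpen_preimage]
      intro t
      rw [isOpen_iff_forall_mem_open]
      intro y hy
      simp only [Set.mem_preimage, Set.mem_Iio] at hy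
      rcases le_or_gt t 1 with ht | ht
      · obtain ⟨r, hrT, hrt⟩ := exists_lt_of_csInf_lt (hTne y) hy
        rcases hrT with rfl | ⟨n, k, rfl, hyc⟩
        · exact absurd hrt (by linarith)
        · obtain ⟨M0, hM0⟩ : ∃ M : ℕ, ((1:ℝ)/2) ^ M < t - (k:ℝ)/2^n :=
            exists_pow_lt_of_lt_one (by linarith) (by norm_num)
          have h2M : ((1:ℝ)/2) ^ M0 = 1 / 2 ^ M0 := by rw [div_pow]; norm_num
          set N := n + M0 with hNdef
          set k' : ℕ := 2 ^ M0 * k + 1 with hk'def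
          have hval : ((k' : ℕ) : ℝ) / 2 ^ N = (k:ℝ)/2^n + 1/2^N := by
            rw [hk'def, hNdef]
            push_cast [pow_add]
            field_simp
          have hpN : (0:ℝ) < 2 ^ N := by positivity
          have hlt2 : (k:ℝ)/2^n < (k':ℝ)/2^N := by
            rw [hval]
            have : (0:ℝ) < 1/2^N := by positivity
            linarith
          have hlt3 : (k':ℝ)/2^N < t := by
            rw [hval]
            have hle : (1:ℝ)/2^N ≤ 1/2^M0 := by
              apply div_le_div_of_nonneg_left (by norm_num) (by positivity)
              exact pow_le_pow_right₀ (by norm_num) (by omega)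
            rw [h2M] at hM0
            linarith
          refine ⟨interior (closure (chain V x N k')), ?_, isOpen_interior, ?_⟩
          · intro z hz
            simp only [Set.mem_preimage, Set.mem_Iio]
            exact lt_of_le_of_lt (hmem z N k' (interior_subset hz)) hlt3
          · exact closure_chain_lt (x := x) hV hnorm hVmem hc hlt2 hyc
      · exact ⟨Set.univ, fun z _ => lt_of_le_of_lt (hf1 z) ht, isOpen_univ, trivial⟩
  exact ⟨f, hcont, hfx, fun y => ⟨hf0 y, hf1 y⟩, hfD⟩


open Set Filter unitInterval

lemma topeq {X : Type*} [t : TopologicalSpace X] (hCR : CompletelyRegularSpace X) :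
    (⨅ g : C(X, ℝ), UniformSpace.comap (g : X → ℝ) inferInstance).toTopologicalSpace = t := by
  rw [UniformSpace.toTopologicalSpace_iInf]
  refine le_antisymm ?_ (le_iInf fun g => ?_)
  · rw [TopologicalSpace.le_def]
    intro O hO
    rw [@isOpen_iff_forall_mem_open X
      (⨅ g : C(X, ℝ), (UniformSpace.comap (g : X → ℝ) inferInstance).toTopologicalSpace) O]
    intro x hx
    obtain ⟨f, cf, hfx, hfK⟩ := hCR.completely_regular x Oᶜ hO.isClosed_compl
      (by simpa using hx)
    refine ⟨(fun y => ((f y : ℝ))) ⁻¹' Set.Iio 1, ?_, ?_, ?_⟩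
    · intro z hz
      simp only [Set.mem_preimage, Set.mem_Iio] at hz
      by_contra hzO
      rw [hfK hzO] at hz
      simp at hz
    · have hind : @IsOpen X
          ((UniformSpace.comap (fun y : X => ((f y : ℝ))) inferInstance).toTopologicalSpace)
          ((fun y => ((f y : ℝ))) ⁻¹' Set.Iio 1) := by
        rw [UniformSpace.toTopologicalSpace_comap]
        exact ⟨_, isOpen_Iio, rfl⟩
      exact hind.mono (iInf_le _ (⟨fun y => ((f y : ℝ)), continuous_subtype_val.comp cf⟩ : C(X, ℝ)))
    · simp only [Set.mem_preimage, Set.mem_Iio, hfx]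
      norm_num
  · rw [UniformSpace.toTopologicalSpace_comap]
    exact continuous_iff_le_induced.mp g.continuous

lemma unif_qu {X : Type*} [u : UniformSpace X] : IsQuasiUniformity (uniformity X) := by
  refine ⟨?_, fun U hU => comp_mem_uniformity_sets hU⟩
  rintro U hU ⟨a, b⟩ hab
  have hab' : a = b := hab
  subst hab'
  exact refl_mem_uniformity hU

lemma unif_normal {X : Type*} [u : UniformSpace X] : IsNormalQuasiUniformity (uniformity X) := by
  intro A U hU z hz
  obtain ⟨Vs, hVs, hsymm, hVU⟩ := comp_symm_mem_uniformity_sets hU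
  obtain ⟨a, haV, haA⟩ := (mem_closure_iff_nhds.mp hz (UniformSpace.ball z Vs)
    (UniformSpace.ball_mem_nhds z hVs))
  have hsub : UniformSpace.ball z Vs ⊆ setBall A U := by
    intro y hy
    exact ⟨a, haA, hVU ⟨z, hsymm.symm _ _ haV, hy⟩⟩
  exact mem_interior_iff_mem_nhds.mpr (Filter.mem_of_superset
    (UniformSpace.ball_mem_nhds z hVs) (hsub.trans subset_closure))

lemma unif_gen {X : Type*} [u : UniformSpace X] : GeneratesTopology (uniformity X) :=
  fun _ => nhds_eq_uniformity

theorem forward {X : Type*} [t : TopologicalSpace X] (hCR : CompletelyRegularSpace X) :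
    ∃ 𝓤 : Filter (X × X), IsQuasiUniformity 𝓤 ∧ IsNormalQuasiUniformity 𝓤 ∧
      GeneratesTopology 𝓤 := by
  have htop := topeq hCR
  refine ⟨@uniformity X (⨅ g : C(X, ℝ), UniformSpace.comap (g : X → ℝ) inferInstance),
    @unif_qu X (⨅ g : C(X, ℝ), UniformSpace.comap (g : X → ℝ) inferInstance), ?_, ?_⟩
  · have h := @unif_normal X (⨅ g : C(X, ℝ), UniformSpace.comap (g : X → ℝ) inferInstance)
    rwa [htop] at h
  · have h := @unif_gen X (⨅ g : C(X, ℝ), UniformSpace.comap (g : X → ℝ) inferInstance)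
    rwa [htop] at h

end QUAux

/-- A semiregular topological space is completely regular if
and only if its topology is generated by a normal quasi-uniformity. -/
theorem completelyRegular_iff_normally_quasiUniformizable {X : Type*}
    [TopologicalSpace X] (hs : Semiregular X) :
    CompletelyRegularSpace X ↔
      ∃ 𝓤 : Filter (X × X), IsQuasiUniformity 𝓤 ∧ IsNormalQuasiUniformity 𝓤 ∧
        GeneratesTopology 𝓤 := by
  constructor
  · exact fun hCR => QUAux.forward hCR
  · rintro ⟨𝓤, ⟨hrefl, hcomp⟩, hnorm, hgen⟩
    refine ⟨fun x K hK hxK => ?_⟩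
    have hO : Kᶜ ∈ 𝓝 x := hK.isOpen_compl.mem_nhds hxK
    obtain ⟨N, hN, hNK⟩ := hs x Kᶜ hO
    have hmono : Monotone (fun U : Set (X × X) => {y : X | (x, y) ∈ U}) :=
      fun U V h y hy => h hy
    have hN' : N ∈ 𝓤.lift' (fun U => {y : X | (x, y) ∈ U}) := by rw [← hgen x]; exact hN
    obtain ⟨V₀, hV₀, hball⟩ := (Filter.mem_lift'_sets hmono).mp hN'
    obtain ⟨f, hfc, hfx, hficc, hf1⟩ := QUAux.exists_separating hrefl hcomp hnorm x hV₀
    refine ⟨fun y => ⟨f y, hficc y⟩, hfc.subtype_mk _, ?_, ?_⟩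
    · exact Subtype.ext (by simpa using hfx)
    · intro y hy
      have hyn : y ∉ interior (closure (setBall {x} V₀)) := by
        intro hmem
        have hyK : y ∈ Kᶜ := hNK (interior_mono (closure_mono
          (by rw [QUAux.setBall_singleton]; exact hball)) hmem)
        exact hyK hy
      exact Subtype.ext (by simpa using hf1 y hyn)
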